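/- Let 𝓢 be an infinite family of subsets of ℕ^n. Then there exist two distinct members S₁, S₂ ∈ 𝓢 such that {x ∈ ℕ^n : ∃ s₁ ∈ S₁ with x ≤ s₁} ⊆ {x ∈ ℕ^n : ∃ s₂ ∈ S₂ with x ≤ s₂}, where ≤ denotes the componentwise order on ℕ^n. -/

import Mathlib

noncomputable section

/-- The lower sets of `α` are partially well-ordered by inclusion. -/
def LowerPWO (α : Type*) [Preorder α] : Prop :=
  Set.PartiallyWellOrderedOn {A : Set α | IsLowerSet A} (· ≤ ·)

/-- Index version of `SublistForall₂`: each entry of `l₁` is related to an entry of `l₂`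
at a later-or-equal index. -/
lemma sf2_index {α β : Type*} {r : α → β → Prop} {l₁ : List α} {l₂ : List β}
    (h : List.SublistForall₂ r l₁ l₂) :
    ∀ k (hk : k < l₁.length), ∃ k', ∃ hk' : k' < l₂.length,
      k ≤ k' ∧ r (l₁.get ⟨k, hk⟩) (l₂.get ⟨k', hk'⟩) := by
  induction h with
  | nil => intro k hk; simp at hk
  | cons hr hsf ih =>
    intro k hk
    cases k with
    | zero => exact ⟨0, by simp, le_refl _, hr⟩
    | succ k =>
      obtain ⟨k', hk', hle, hr'⟩ := ih k (by simpa using hk)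
      exact ⟨k' + 1, by simpa using hk', Nat.succ_le_succ hle, hr'⟩
  | cons_right hsf ih =>
    intro k hk
    obtain ⟨k', hk', hle, hr'⟩ := ih k hk
    exact ⟨k' + 1, by simpa using hk', hle.trans (Nat.le_succ _), hr'⟩

/-- A weakly decreasing sequence of lower sets is eventually constant, when the lower sets
are partially well-ordered by inclusion. -/
lemma eventually_const {α : Type*} [Preorder α] (hp : LowerPWO α) (g : ℕ → Set α)
    (hl : ∀ k, IsLowerSet (g k)) (ha : ∀ {k l : ℕ}, k ≤ l → g l ⊆ g k) :
    ∃ N, ∀ k, N ≤ k → g k = g N := by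
  by_contra h
  push_neg at h
  -- build a strictly decreasing chain of values
  have h' : ∀ N : ℕ, ∃ k, N ≤ k ∧ g k ⊂ g N := by
    intro N
    obtain ⟨k, hk, hne⟩ := h N
    exact ⟨k, hk, ssubset_of_subset_of_ne (ha hk) hne⟩
  choose F hF1 hF2 using h'
  let φ : ℕ → ℕ := fun i => F^[i] 0
  have hstep : ∀ i, g (φ (i + 1)) ⊂ g (φ i) := by
    intro i
    have : φ (i + 1) = F (φ i) := Function.iterate_succ_apply' F i 0
    rw [this]
    exact hF2 (φ i)
  have hchain : ∀ i j, i < j → g (φ j) ⊂ g (φ i) := by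
    intro i j hij
    induction j with
    | zero => omega
    | succ j ih =>
      rcases Nat.lt_succ_iff_lt_or_eq.1 hij with h1 | h1
      · exact (hstep j).trans (ih h1)
      · rw [h1]; exact hstep j
  obtain ⟨i, j, hij, hsub⟩ := Set.PartiallyWellOrderedOn.exists_lt hp (f := fun i => g (φ i)) (fun i => hl (φ i))
  exact absurd hsub (hchain i j hij).not_subset

/-- The key inductive step: if the lower sets of `α` are pwo, so are those of `α × ℕ`. -/
lemma lowerPWO_prod_nat {α : Type*} [Preorder α] (hp : LowerPWO α) : LowerPWO (α × ℕ) := by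
  rw [LowerPWO, Set.partiallyWellOrderedOn_iff_exists_lt]
  intro f hf
  -- slices by the ℕ coordinate
  set s : ℕ → ℕ → Set α := fun m k => {a | (a, k) ∈ f m} with hs
  have hslower : ∀ m k, IsLowerSet (s m k) := by
    intro m k a b hba ha
    exact hf m (Prod.mk_le_mk.2 ⟨hba, le_refl k⟩) ha
  have hanti : ∀ (m : ℕ) {k l : ℕ}, k ≤ l → s m l ⊆ s m k := by
    intro m k l hkl a ha
    exact hf m (Prod.mk_le_mk.2 ⟨le_refl a, hkl⟩) ha
  choose N hN using fun m => eventually_const hp (s m) (hslower m) (hanti m)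
  have hmin : ∀ m k, s m (N m) ⊆ s m k := by
    intro m k
    rcases le_total k (N m) with h | h
    · exact hanti m h
    · rw [hN m k h]
  set L : ℕ → Set α := fun m => s m (N m) with hL
  set Λ : ℕ → List (Set α) := fun m => (List.range (N m)).map (s m) with hΛ
  -- extract a subsequence along which the limits are monotone
  obtain ⟨g, hg⟩ := Set.PartiallyWellOrderedOn.exists_monotone_subseq hp (f := L) (fun m => hslower m _)
  -- apply Higman's lemma to the lists of initial slices
  have hH := Set.PartiallyWellOrderedOn.partiallyWellOrderedOn_sublistForall₂
    (α := Set α) (· ≤ ·) hp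
  obtain ⟨i, j, hij, hsf⟩ := hH.exists_lt (f := fun i => Λ (g i)) (by
    intro i x hx
    simp only [hΛ, List.mem_map, List.mem_range] at hx
    obtain ⟨k, _, rfl⟩ := hx
    exact hslower (g i) k)
  refine ⟨g i, g j, g.strictMono hij, ?_⟩
  rintro ⟨a, k⟩ hak
  have ha : a ∈ s (g i) k := hak
  by_cases hk : k < N (g i)
  · have hk' : k < (Λ (g i)).length := by simpa [hΛ] using hk
    obtain ⟨k', hk'', hle, hr⟩ := sf2_index hsf k hk'
    have e1 : (Λ (g i)).get ⟨k, hk'⟩ = s (g i) k := by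
      simp [hΛ]
    have e2 : (Λ (g j)).get ⟨k', hk''⟩ = s (g j) k' := by
      simp [hΛ]
    have hsub : s (g i) k ⊆ s (g j) k' := by
      rw [← e1, ← e2]; exact hr
    exact hanti (g j) hle (hsub ha)
  · push_neg at hk
    have h1 : a ∈ L (g i) := by
      show a ∈ s (g i) (N (g i))
      rw [← hN (g i) k hk]; exact ha
    have h2 : a ∈ L (g j) := hg i j hij.le h1
    exact hmin (g j) k h2

/-- Transfer along an order isomorphism. -/
lemma lowerPWO_of_orderIso {α β : Type*} [Preorder α] [Preorder β] (e : α ≃o β)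
    (hp : LowerPWO β) : LowerPWO α := by
  rw [LowerPWO, Set.partiallyWellOrderedOn_iff_exists_lt]
  intro f hf
  obtain ⟨i, j, hij, hsub⟩ := Set.PartiallyWellOrderedOn.exists_lt hp (f := fun m => e '' f m) (fun m => (hf m).image e)
  exact ⟨i, j, hij, (Set.image_subset_image_iff e.injective).1 hsub⟩

/-- The order isomorphism between `Fin (n+1) → ℕ` and `(Fin n → ℕ) × ℕ`. -/
def snocOrderIso (n : ℕ) : (Fin (n + 1) → ℕ) ≃o ((Fin n → ℕ) × ℕ) where
  toFun x := (x ∘ Fin.castSucc, x (Fin.last n))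
  invFun p := Fin.snoc p.1 p.2
  left_inv x := by
    funext i
    refine Fin.lastCases ?_ ?_ i
    · simp
    · intro i; simp
  right_inv p := by
    ext
    · simp
    · simp
  map_rel_iff' := by
    intro x y
    constructor
    · rintro ⟨h1, h2⟩ i
      refine Fin.lastCases ?_ ?_ i
      · exact h2
      · intro i; exact h1 i
    · intro h
      exact ⟨fun i => h _, h _⟩

/-- Lower sets of `Fin n → ℕ` are partially well-ordered by inclusion. -/
lemma lowerPWO_pi : ∀ n : ℕ, LowerPWO (Fin n → ℕ) := by
  intro n
  induction n with
  | zero =>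
    rw [LowerPWO, Set.partiallyWellOrderedOn_iff_exists_lt]
    intro f _
    obtain ⟨i, j, hij, hfij⟩ := Finite.exists_ne_map_eq_of_infinite f
    rcases hij.lt_or_gt with h | h
    · exact ⟨i, j, h, le_of_eq hfij⟩
    · exact ⟨j, i, h, le_of_eq hfij.symm⟩
  | succ n ih =>
    exact lowerPWO_of_orderIso (snocOrderIso n) (lowerPWO_prod_nat ih)

/-- Lemma: among infinitely many subsets of ℕⁿ, two distinct ones have comparable
downward closures (with respect to the componentwise order). -/
theorem exists_comparable_down_closures {n : ℕ}
    (𝒮 : Set (Set (Fin n → ℕ))) (hinf : 𝒮.Infinite) :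
    ∃ S₁ ∈ 𝒮, ∃ S₂ ∈ 𝒮, S₁ ≠ S₂ ∧
      {x : Fin n → ℕ | ∃ s₁ ∈ S₁, x ≤ s₁} ⊆ {x : Fin n → ℕ | ∃ s₂ ∈ S₂, x ≤ s₂} := by
  let g0 := hinf.natEmbedding
  have hD : ∀ m : ℕ, IsLowerSet {x : Fin n → ℕ | ∃ s₁ ∈ (g0 m : Set (Fin n → ℕ)), x ≤ s₁} := by
    rintro m a b hba ⟨s, hs, hle⟩
    exact ⟨s, hs, hba.trans hle⟩
  obtain ⟨i, j, hij, hsub⟩ := Set.PartiallyWellOrderedOn.exists_lt (lowerPWO_pi n)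
    (f := fun m => {x : Fin n → ℕ | ∃ s₁ ∈ (g0 m : Set (Fin n → ℕ)), x ≤ s₁}) hD
  refine ⟨(g0 i : Set (Fin n → ℕ)), (g0 i).2, (g0 j : Set (Fin n → ℕ)), (g0 j).2, ?_, hsub⟩
  intro h
  exact hij.ne (g0.injective (Subtype.ext h))
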